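/- arXiv:0802.1942 — 3 statements merged into one kernel-verified Lean document; each statement's English description precedes it below -/
import Mathlib

section
/- For 1 ≤ p < ∞ and n ≥ 2, the integral φ(p) = ∫_{B_p^n} x_1^2 dx equals (2/p)·|B_p^{n−1}|·Γ(3/p)Γ(1+(n−1)/p)/Γ(1+(n+2)/p). -/
open MeasureTheory
open scoped Pointwise

open Set in
lemma real_beta_Ioo {a b : ℝ} (ha : 0 < a) (hb : 0 < b) :
    ∫ x in Set.Ioo (0:ℝ) 1, x ^ (a - 1) * (1 - x) ^ (b - 1) =
      Real.Gamma a * Real.Gamma b / Real.Gamma (a + b) := by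
  have key : Complex.betaIntegral a b =
      ((∫ x in (0:ℝ)..1, x ^ (a - 1) * (1 - x) ^ (b - 1) : ℝ) : ℂ) := by
    rw [Complex.betaIntegral, ← intervalIntegral.integral_ofReal]
    refine intervalIntegral.integral_congr fun x hx => ?_
    rw [Set.uIcc_of_le (zero_le_one)] at hx
    push_cast [Complex.ofReal_cpow hx.1, Complex.ofReal_cpow (by linarith [hx.2] : (0:ℝ) ≤ 1 - x)]
    ring
  have h2 := Complex.Gamma_mul_Gamma_eq_betaIntegral
    (s := (a:ℂ)) (t := (b:ℂ)) (by simpa using ha) (by simpa using hb)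
  rw [key, Complex.Gamma_ofReal, Complex.Gamma_ofReal, ← Complex.ofReal_add,
    Complex.Gamma_ofReal] at h2
  have h3 : Real.Gamma a * Real.Gamma b =
      Real.Gamma (a + b) * ∫ x in (0:ℝ)..1, x ^ (a - 1) * (1 - x) ^ (b - 1) := by
    exact_mod_cast h2
  have hG : Real.Gamma (a + b) ≠ 0 := (Real.Gamma_pos_of_pos (by linarith)).ne'
  rw [intervalIntegral.integral_of_le zero_le_one,
    MeasureTheory.integral_Ioc_eq_integral_Ioo] at h3
  rw [eq_div_iff hG]
  linarith [h3]

theorem phi_p_formula (n : ℕ) (hn : 2 ≤ n) (p : ℝ) (hp : 1 ≤ p) :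
    ∫ x in {x : Fin n → ℝ | ∑ i, |x i| ^ p ≤ 1}, (x ⟨0, by omega⟩) ^ 2 =
      (2 / p) * (volume {x : Fin (n - 1) → ℝ | ∑ i, |x i| ^ p ≤ 1}).toReal *
        (Real.Gamma (3 / p) * Real.Gamma (1 + ((n : ℝ) - 1) / p) /
          Real.Gamma (1 + ((n : ℝ) + 2) / p)) := by
  obtain ⟨m, rfl⟩ : ∃ m, n = m + 1 := ⟨n - 1, by omega⟩
  have hm : 1 ≤ m := by omega
  have hp0 : 0 < p := by linarith
  have hpne : p ≠ 0 := hp0.ne'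
  show ∫ x in {x : Fin (m+1) → ℝ | ∑ i, |x i| ^ p ≤ 1}, (x ⟨0, by omega⟩) ^ 2 =
      (2 / p) * (volume {x : Fin m → ℝ | ∑ i, |x i| ^ p ≤ 1}).toReal *
        (Real.Gamma (3 / p) * Real.Gamma (1 + (((m+1 : ℕ) : ℝ) - 1) / p) /
          Real.Gamma (1 + (((m+1 : ℕ) : ℝ) + 2) / p))
  -- basic facts about the balls
  have hsum_cont : ∀ k : ℕ, Continuous fun x : Fin k → ℝ => ∑ i, |x i| ^ p := by
    intro k
    exact continuous_finset_sum _ fun i _ =>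
      (Real.continuous_rpow_const hp0.le).comp ((continuous_apply i).abs)
  have hmeas : ∀ k : ℕ, MeasurableSet {x : Fin k → ℝ | ∑ i, |x i| ^ p ≤ 1} :=
    fun k => measurableSet_le (hsum_cont k).measurable measurable_const
  have habs : ∀ {k : ℕ} (x : Fin k → ℝ), (∑ i, |x i| ^ p ≤ 1) → ∀ i, |x i| ≤ 1 := by
    intro k x hx i
    by_contra h
    push_neg at h
    have h1 : (1:ℝ) < |x i| ^ p :=
      (Real.one_lt_rpow_iff_of_pos (by linarith)).2 (Or.inl ⟨h, hp0⟩)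
    have h2 : |x i| ^ p ≤ ∑ j, |x j| ^ p :=
      Finset.single_le_sum (fun j _ => Real.rpow_nonneg (abs_nonneg _) p) (Finset.mem_univ i)
    linarith
  have hfin : ∀ k : ℕ, volume {x : Fin k → ℝ | ∑ i, |x i| ^ p ≤ 1} ≠ ⊤ := by
    intro k
    have hsub : {x : Fin k → ℝ | ∑ i, |x i| ^ p ≤ 1} ⊆
        Set.pi Set.univ fun _ => Set.Icc (-1:ℝ) 1 := by
      intro x hx i _
      exact abs_le.1 (habs x hx i)
    refine ne_of_lt (lt_of_le_of_lt (measure_mono hsub) ?_)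
    rw [volume_pi_pi]
    exact ENNReal.prod_lt_top fun i _ => by simp [Real.volume_Icc]
  set B : Set (Fin m → ℝ) := {x | ∑ i, |x i| ^ p ≤ 1} with hBdef
  set V : ENNReal := volume B with hVdef
  have hVne : V ≠ ⊤ := hfin m
  -- step 1 : move to ℝ × (Fin m → ℝ)
  set s' : Set (ℝ × (Fin m → ℝ)) := {q | |q.1| ^ p + ∑ i, |q.2 i| ^ p ≤ 1} with hs'def
  have hs'cont : Continuous fun q : ℝ × (Fin m → ℝ) => |q.1| ^ p + ∑ i, |q.2 i| ^ p :=
    ((Real.continuous_rpow_const hp0.le).comp continuous_fst.abs).add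
      ((hsum_cont m).comp continuous_snd)
  have hs'meas : MeasurableSet s' := measurableSet_le hs'cont.measurable measurable_const
  have hpre : (⇑(MeasurableEquiv.piFinSuccAbove (fun _ : Fin (m+1) => ℝ) 0)) ⁻¹' s' =
      {x : Fin (m+1) → ℝ | ∑ i, |x i| ^ p ≤ 1} := by
    ext x
    simp only [hs'def, Set.mem_preimage, Set.mem_setOf_eq, MeasurableEquiv.piFinSuccAbove_apply,
      Fin.insertNthEquiv_zero, Fin.consEquiv_symm_apply, Fin.removeNth, Fin.tail, Fin.zero_succAbove,
      Fin.sum_univ_succ]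
  have step1 : ∫ x in {x : Fin (m+1) → ℝ | ∑ i, |x i| ^ p ≤ 1}, (x ⟨0, by omega⟩) ^ 2 =
      ∫ q in s', q.1 ^ 2 := by
    rw [← hpre]
    exact (volume_preserving_piFinSuccAbove (fun _ : Fin (m+1) => ℝ) 0).setIntegral_preimage_emb
      (MeasurableEquiv.measurableEmbedding _) (fun q => q.1 ^ 2) s'
  rw [step1]
  -- step 2 : Fubini
  have hbound : ∀ q ∈ s', ‖q.1 ^ 2‖ ≤ 1 := by
    intro q hq
    have h1 : |q.1| ^ p ≤ 1 := by
      have : (0:ℝ) ≤ ∑ i, |q.2 i| ^ p :=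
        Finset.sum_nonneg fun i _ => Real.rpow_nonneg (abs_nonneg _) p
      simp only [hs'def, Set.mem_setOf_eq] at hq
      linarith
    have h2 : |q.1| ≤ 1 := by
      by_contra h
      push_neg at h
      have := (Real.one_lt_rpow_iff_of_pos (by linarith)).2 (Or.inl ⟨h, hp0⟩)
      linarith
    calc ‖q.1 ^ 2‖ = |q.1| ^ 2 := by rw [norm_pow]; rfl
    _ ≤ 1 := pow_le_one₀ (abs_nonneg _) h2
  have hs'fin : volume s' ≠ ⊤ := by
    have hsub : s' ⊆ (Set.Icc (-1:ℝ) 1) ×ˢ (Set.pi Set.univ fun _ : Fin m => Set.Icc (-1:ℝ) 1) := by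
      rintro ⟨t, y⟩ hq
      have h1 : |t| ^ p ≤ 1 := by
        have : (0:ℝ) ≤ ∑ i, |y i| ^ p :=
          Finset.sum_nonneg fun i _ => Real.rpow_nonneg (abs_nonneg _) p
        simp only [hs'def, Set.mem_setOf_eq] at hq
        linarith
      have h2 : ∑ i, |y i| ^ p ≤ 1 := by
        have : (0:ℝ) ≤ |t| ^ p := Real.rpow_nonneg (abs_nonneg _) p
        simp only [hs'def, Set.mem_setOf_eq] at hq
        linarith
      constructor
      · refine abs_le.1 ?_
        by_contra h
        push_neg at h
        have := (Real.one_lt_rpow_iff_of_pos (by linarith)).2 (Or.inl ⟨h, hp0⟩)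
        linarith
      · intro i _
        exact abs_le.1 (habs y h2 i)
    refine ne_of_lt (lt_of_le_of_lt (measure_mono hsub) ?_)
    rw [MeasureTheory.Measure.volume_eq_prod, MeasureTheory.Measure.prod_prod, volume_pi_pi]
    refine ENNReal.mul_lt_top ?_ ?_
    · simp [Real.volume_Icc]
    · exact ENNReal.prod_lt_top fun i _ => by simp [Real.volume_Icc]
  have hint : Integrable (s'.indicator fun q : ℝ × (Fin m → ℝ) => q.1 ^ 2) := by
    rw [integrable_indicator_iff hs'meas]
    exact Measure.integrableOn_of_bounded hs'fin
      ((continuous_fst.pow 2).aestronglyMeasurable) (ae_restrict_of_forall_mem hs'meas hbound)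
  -- the slice sets
  set A : ℝ → Set (Fin m → ℝ) := fun t => {y | ∑ i, |y i| ^ p ≤ 1 - |t| ^ p} with hAdef
  have hAmeas : ∀ t, MeasurableSet (A t) :=
    fun t => measurableSet_le (hsum_cont m).measurable measurable_const
  have step2 : ∫ q in s', q.1 ^ 2 = ∫ t : ℝ, (volume (A t)).toReal * t ^ 2 := by
    rw [← integral_indicator hs'meas, MeasureTheory.Measure.volume_eq_prod,
      MeasureTheory.integral_prod _ (by rwa [MeasureTheory.Measure.volume_eq_prod] at hint)]
    refine integral_congr_ae (Filter.Eventually.of_forall fun t => ?_)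
    dsimp only
    have : (fun y => s'.indicator (fun q : ℝ × (Fin m → ℝ) => q.1 ^ 2) (t, y)) =
        (A t).indicator fun _ => t ^ 2 := by
      ext y
      simp only [Set.indicator_apply, hs'def, hAdef, Set.mem_setOf_eq]
      congr 1
      simp only [eq_iff_iff]
      constructor <;> intro h <;> linarith
    rw [this, integral_indicator_const _ (hAmeas t)]
    simp [mul_comm]
    exact Or.inl rfl
  rw [step2]
  -- step 3 : compute the slice volumes
  have hvol : ∀ t : ℝ, |t| < 1 →
      volume (A t) = ENNReal.ofReal ((1 - |t| ^ p) ^ ((m:ℝ) / p)) * V := by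
    intro t ht
    have hc : 0 < 1 - |t| ^ p := by
      have : |t| ^ p < 1 := Real.rpow_lt_one (abs_nonneg _) ht hp0
      linarith
    set c : ℝ := 1 - |t| ^ p with hcdef
    set r : ℝ := c ^ (1 / p) with hrdef
    have hr : 0 < r := Real.rpow_pos_of_pos hc _
    have hrp : r ^ p = c := by
      rw [hrdef, ← Real.rpow_mul hc.le, one_div_mul_cancel hpne, Real.rpow_one]
    have hset : A t = r • B := by
      ext y
      simp only [hAdef, Set.mem_setOf_eq, ← hcdef]
      rw [Set.mem_smul_set_iff_inv_smul_mem₀ hr.ne']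
      simp only [hBdef, Set.mem_setOf_eq, Pi.smul_apply, smul_eq_mul]
      have : ∀ i, |r⁻¹ * y i| ^ p = c⁻¹ * |y i| ^ p := by
        intro i
        rw [abs_mul, abs_of_pos (inv_pos.2 hr), Real.mul_rpow (inv_nonneg.2 hr.le) (abs_nonneg _),
          Real.inv_rpow hr.le, hrp]
      rw [Finset.sum_congr rfl fun i _ => this i, ← Finset.mul_sum]
      rw [inv_mul_le_iff₀ hc, mul_one]
    rw [hset, Measure.addHaar_smul_of_nonneg volume hr.le B,
      Module.finrank_fintype_fun_eq_card, Fintype.card_fin, hrdef,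
      ← Real.rpow_natCast _ m, ← Real.rpow_mul hc.le]
    congr 2
    push_cast
    ring
  -- step 4 : reduce to a 1-dimensional integral over Ioo (-1) 1
  set f : ℝ → ℝ := fun t => (1 - |t| ^ p) ^ ((m:ℝ) / p) * t ^ 2 with hfdef
  have hae : (fun t : ℝ => (volume (A t)).toReal * t ^ 2) =ᵐ[volume]
      (Set.Ioo (-1:ℝ) 1).indicator (fun t => V.toReal * f t) := by
    have hnull : volume ({-1, 1} : Set ℝ) = 0 :=
      Set.Countable.measure_zero (Set.to_countable _) volume
    have h0 : ∀ᵐ t : ℝ, t ∉ ({-1, 1} : Set ℝ) := compl_mem_ae_iff.mpr hnull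
    filter_upwards [h0] with t ht
    rcases lt_trichotomy |t| 1 with h | h | h
    · have htIoo : t ∈ Set.Ioo (-1:ℝ) 1 := by
        rcases abs_lt.1 h with ⟨h1, h2⟩
        exact ⟨h1, h2⟩
      rw [Set.indicator_of_mem htIoo, hvol t h, ENNReal.toReal_mul,
        ENNReal.toReal_ofReal (Real.rpow_nonneg (by
          have : |t| ^ p < 1 := Real.rpow_lt_one (abs_nonneg _) h hp0
          linarith) _)]
      rw [hfdef]
      ring
    · exfalso
      rcases abs_eq (le_of_lt one_pos) |>.1 h with h1 | h1
      · exact ht (by simp [h1])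
      · exact ht (by simp [h1])
    · have hA : A t = ∅ := by
        ext y
        simp only [hAdef, Set.mem_setOf_eq, Set.mem_empty_iff_false, iff_false, not_le]
        have h1 : (1:ℝ) < |t| ^ p :=
          (Real.one_lt_rpow_iff_of_pos (by linarith)).2 (Or.inl ⟨h, hp0⟩)
        have h2 : (0:ℝ) ≤ ∑ i, |y i| ^ p :=
          Finset.sum_nonneg fun i _ => Real.rpow_nonneg (abs_nonneg _) p
        linarith
      have htIoo : t ∉ Set.Ioo (-1:ℝ) 1 := by
        intro hmem
        have := abs_lt.2 ⟨hmem.1, hmem.2⟩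
        linarith
      rw [Set.indicator_of_notMem htIoo, hA]
      simp
  rw [integral_congr_ae hae, integral_indicator measurableSet_Ioo, integral_const_mul]
  -- step 5 : symmetry
  have hf_cont : Continuous f := by
    have c1 : Continuous fun t : ℝ => 1 - |t| ^ p :=
      continuous_const.sub ((Real.continuous_rpow_const hp0.le).comp continuous_abs)
    exact ((Real.continuous_rpow_const (by positivity)).comp c1).mul (continuous_pow 2)
  have hfeven : ∀ t : ℝ, f (-t) = f t := by
    intro t
    rw [hfdef]
    simp [abs_neg, neg_sq]
  have hIoo : ∫ t in Set.Ioo (-1:ℝ) 1, f t = 2 * ∫ t in Set.Ioo (0:ℝ) 1, f t := by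
    have heven : ∫ t in (-1:ℝ)..0, f t = ∫ t in (0:ℝ)..1, f t := by
      calc ∫ t in (-1:ℝ)..0, f t = ∫ t in (-1:ℝ)..0, f (-t) := by
            refine intervalIntegral.integral_congr fun x _ => (hfeven x).symm
        _ = ∫ t in (-(0:ℝ))..(-(-1:ℝ)), f t := intervalIntegral.integral_comp_neg f
        _ = ∫ t in (0:ℝ)..1, f t := by norm_num
    have hsplit : (∫ t in (-1:ℝ)..0, f t) + ∫ t in (0:ℝ)..1, f t = ∫ t in (-1:ℝ)..1, f t :=
      intervalIntegral.integral_add_adjacent_intervals (hf_cont.intervalIntegrable _ _)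
        (hf_cont.intervalIntegrable _ _)
    rw [← MeasureTheory.integral_Ioc_eq_integral_Ioo,
      ← intervalIntegral.integral_of_le (by norm_num : (-1:ℝ) ≤ 1), ← hsplit, heven,
      intervalIntegral.integral_of_le zero_le_one, MeasureTheory.integral_Ioc_eq_integral_Ioo]
    ring
  have habs01 : ∫ t in Set.Ioo (0:ℝ) 1, f t =
      ∫ t in Set.Ioo (0:ℝ) 1, (1 - t ^ p) ^ ((m:ℝ) / p) * t ^ 2 := by
    refine setIntegral_congr_fun measurableSet_Ioo fun t ht => ?_
    rw [hfdef]
    dsimp only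
    rw [abs_of_pos ht.1]
  -- step 6 : the substitution u = t ^ p
  have hsubst : p * ∫ t in Set.Ioo (0:ℝ) 1, (1 - t ^ p) ^ ((m:ℝ) / p) * t ^ 2 =
      ∫ u in Set.Ioo (0:ℝ) 1, u ^ (3 / p - 1) * (1 - u) ^ ((m:ℝ) / p) := by
    set g : ℝ → ℝ := (Set.Ioo (0:ℝ) 1).indicator
      (fun u => u ^ (3 / p - 1) * (1 - u) ^ ((m:ℝ) / p)) with hgdef
    have hkey := integral_comp_rpow_Ioi g hpne
    have hrhs : ∫ y in Set.Ioi (0:ℝ), g y =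
        ∫ u in Set.Ioo (0:ℝ) 1, u ^ (3 / p - 1) * (1 - u) ^ ((m:ℝ) / p) := by
      rw [hgdef, setIntegral_indicator measurableSet_Ioo,
        Set.inter_eq_self_of_subset_right Set.Ioo_subset_Ioi_self]
    have hlhs : ∫ x in Set.Ioi (0:ℝ), (|p| * x ^ (p - 1)) • g (x ^ p) =
        ∫ x in Set.Ioi (0:ℝ), (Set.Ioo (0:ℝ) 1).indicator
          (fun x => p * ((1 - x ^ p) ^ ((m:ℝ) / p) * x ^ 2)) x := by
      refine setIntegral_congr_fun measurableSet_Ioi fun x hx => ?_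
      have hx0 : (0:ℝ) < x := hx
      by_cases hx1 : x < 1
      · have hxo : x ^ p ∈ Set.Ioo (0:ℝ) 1 :=
          ⟨Real.rpow_pos_of_pos hx0 _, Real.rpow_lt_one hx0.le hx1 hp0⟩
        have hxmem : x ∈ Set.Ioo (0:ℝ) 1 := ⟨hx0, hx1⟩
        rw [hgdef, Set.indicator_of_mem hxo, Set.indicator_of_mem hxmem,
          smul_eq_mul, abs_of_pos hp0]
        have h1 : (x ^ p) ^ (3 / p - 1) = x ^ (3 - p) := by
          rw [← Real.rpow_mul hx0.le]
          congr 1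
          field_simp
        have h2 : x ^ (p - 1) * x ^ (3 - p) = x ^ 2 := by
          rw [← Real.rpow_add hx0, show p - 1 + (3 - p) = ((2:ℕ):ℝ) by push_cast; ring,
            Real.rpow_natCast]
        rw [h1, show p * x ^ (p - 1) * (x ^ (3 - p) * (1 - x ^ p) ^ ((m:ℝ) / p)) =
          p * ((1 - x ^ p) ^ ((m:ℝ) / p) * (x ^ (p - 1) * x ^ (3 - p))) from by ring, h2]
      · push_neg at hx1
        have hxo : x ^ p ∉ Set.Ioo (0:ℝ) 1 := by
          intro hmem
          exact absurd hmem.2 (not_lt.2 (Real.one_le_rpow hx1 hp0.le))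
        rw [hgdef, Set.indicator_of_notMem hxo,
          Set.indicator_of_notMem (fun hmem => absurd hmem.2 (not_lt.2 hx1) : x ∉ Set.Ioo 0 1),
          smul_zero]
    rw [hlhs, hrhs] at hkey
    rw [setIntegral_indicator measurableSet_Ioo,
      Set.inter_eq_self_of_subset_right Set.Ioo_subset_Ioi_self, integral_const_mul] at hkey
    exact hkey
  -- step 7 : assemble everything
  have hbeta := real_beta_Ioo (a := 3 / p) (b := (m:ℝ) / p + 1) (by positivity) (by positivity)
  rw [show ((m:ℝ) / p + 1) - 1 = (m:ℝ) / p from by ring] at hbeta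
  rw [hIoo, habs01]
  have hI := hsubst
  rw [hbeta] at hI
  have hg1 : Real.Gamma (1 + (((m+1:ℕ):ℝ) - 1) / p) = Real.Gamma ((m:ℝ) / p + 1) := by
    congr 1
    push_cast
    ring
  have hg2 : Real.Gamma (1 + (((m+1:ℕ):ℝ) + 2) / p) = Real.Gamma (3 / p + ((m:ℝ) / p + 1)) := by
    congr 1
    push_cast
    field_simp
    ring
  rw [hg1, hg2, ← hI]
  field_simp
end

section
/- For n ≥ 1, the quantity f(n,1) := (∫_{B_1^n}∫_{B_∞^n} ⟨x,y⟩^2 dx dy) / (|B_1^n|·|B_∞^n|) equals 2n/(3(n+1)(n+2)). -/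
open MeasureTheory Real

noncomputable section FnOneAux

namespace FnOneAux

/-- The scaled cross-polytope. -/
def Sset (n : ℕ) (r : ℝ) : Set (Fin n → ℝ) := {x | ∑ i, |x i| ≤ r}

lemma isClosed_Sset (n : ℕ) (r : ℝ) : IsClosed (Sset n r) :=
  isClosed_le (by fun_prop) continuous_const

lemma measurableSet_Sset (n : ℕ) (r : ℝ) : MeasurableSet (Sset n r) :=
  (isClosed_Sset n r).measurableSet

lemma Sset_subset_ball (n : ℕ) (r : ℝ) : Sset n r ⊆ Metric.closedBall 0 |r| := by
  intro x hx
  simp only [Metric.mem_closedBall, dist_zero_right]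
  rw [pi_norm_le_iff_of_nonneg (abs_nonneg r)]
  intro i
  calc ‖x i‖ = |x i| := rfl
    _ ≤ ∑ j, |x j| := Finset.single_le_sum (f := fun j => |x j|)
        (fun j _ => abs_nonneg _) (Finset.mem_univ i)
    _ ≤ r := hx
    _ ≤ |r| := le_abs_self r

lemma isCompact_Sset (n : ℕ) (r : ℝ) : IsCompact (Sset n r) :=
  (isCompact_closedBall 0 |r|).of_isClosed_subset (isClosed_Sset n r) (Sset_subset_ball n r)

lemma Sset_empty {n : ℕ} {r : ℝ} (hr : r < 0) : Sset n r = ∅ := by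
  ext x
  simp only [Sset, Set.mem_setOf_eq, Set.mem_empty_iff_false, iff_false, not_le]
  exact hr.trans_le (Finset.sum_nonneg fun i _ => abs_nonneg _)

def Vn (n : ℕ) (r : ℝ) : ℝ := (volume (Sset n r)).toReal

lemma Vn_eq (n : ℕ) {r : ℝ} (hr : 0 ≤ r) : Vn n r = (2 * r) ^ n / n.factorial := by
  rcases Nat.eq_zero_or_pos n with h0 | hn
  · subst h0
    have : Sset 0 r = Set.univ := by
      ext x; simp [Sset, hr]
    rw [Vn, this]; simp [volume_pi]
  · have : Nonempty (Fin n) := Fin.pos_iff_nonempty.mp hn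
    have hset : Sset n r = {x : Fin n → ℝ | (∑ i, |x i| ^ (1:ℝ)) ^ (1 / (1:ℝ)) ≤ r} := by
      ext x; simp [Sset, Real.rpow_one]
    rw [Vn, hset, MeasureTheory.volume_sum_rpow_le (Fin n) le_rfl r]
    have h1 : Real.Gamma (1 / 1 + 1) = 1 := by
      norm_num [Real.Gamma_two]
    have h2 : Real.Gamma ((Fintype.card (Fin n) : ℝ) / 1 + 1) = n.factorial := by
      rw [Fintype.card_fin, div_one, Real.Gamma_nat_eq_factorial]
    rw [h1, h2, Fintype.card_fin]
    rw [ENNReal.toReal_mul, ENNReal.toReal_pow, ENNReal.toReal_ofReal hr,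
      ENNReal.toReal_ofReal (by positivity)]
    rw [mul_pow]
    ring

lemma Vn_empty {n : ℕ} {r : ℝ} (hr : r < 0) : Vn n r = 0 := by
  rw [Vn, Sset_empty hr]; simp

def Mn (n : ℕ) (r : ℝ) : ℝ := ∫ x in Sset n r, ∑ i, (x i)^2

lemma Mn_empty {n : ℕ} {r : ℝ} (hr : r < 0) : Mn n r = 0 := by
  rw [Mn, Sset_empty hr]; simp

lemma Mn_succ (n : ℕ) (r : ℝ) :
    Mn (n+1) r = ∫ t : ℝ, (t^2 * Vn n (r - |t|) + Mn n (r - |t|)) := by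
  classical
  set K : Set (ℝ × (Fin n → ℝ)) := {p | |p.1| + ∑ i, |p.2 i| ≤ r} with hK
  have hKclosed : IsClosed K := isClosed_le (by fun_prop) continuous_const
  have hKsub : K ⊆ Metric.closedBall 0 |r| := by
    intro p hp
    have h1 : |p.1| ≤ r := by
      have := Finset.sum_nonneg (fun i (_ : i ∈ Finset.univ) => abs_nonneg (p.2 i))
      simp only [hK, Set.mem_setOf_eq] at hp; linarith
    have h2 : ∀ i, |p.2 i| ≤ r := by
      intro i
      have hs := Finset.single_le_sum (f := fun j => |p.2 j|)
        (fun j _ => abs_nonneg _) (Finset.mem_univ i)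
      have h0 := abs_nonneg p.1
      simp only [hK, Set.mem_setOf_eq] at hp; linarith
    simp only [Metric.mem_closedBall, dist_zero_right, Prod.norm_def]
    refine max_le (h1.trans (le_abs_self r)) ?_
    rw [pi_norm_le_iff_of_nonneg (abs_nonneg r)]
    exact fun i => (h2 i).trans (le_abs_self r)
  have hKcompact : IsCompact K :=
    (isCompact_closedBall 0 |r|).of_isClosed_subset hKclosed hKsub
  have hGint : Integrable (K.indicator fun p : ℝ × (Fin n → ℝ) => p.1^2 + ∑ i, (p.2 i)^2)
      (volume.prod volume) := by
    rw [← Measure.volume_eq_prod]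
    rw [integrable_indicator_iff hKclosed.measurableSet]
    exact ContinuousOn.integrableOn_compact hKcompact (Continuous.continuousOn (by fun_prop))
  have mp := (volume_preserving_piFinSuccAbove (fun _ : Fin (n+1) => ℝ) 0).symm
  rw [Mn, ← MeasureTheory.integral_indicator (measurableSet_Sset (n+1) r),
    ← mp.integral_comp']
  have hpt : ∀ p : ℝ × (Fin n → ℝ),
      (Sset (n+1) r).indicator (fun x => ∑ i, (x i)^2)
        ((MeasurableEquiv.piFinSuccAbove (fun _ : Fin (n+1) => ℝ) 0).symm p)
      = K.indicator (fun p : ℝ × (Fin n → ℝ) => p.1^2 + ∑ i, (p.2 i)^2) p := by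
    rintro ⟨t, y⟩
    have he : ((MeasurableEquiv.piFinSuccAbove (fun _ : Fin (n+1) => ℝ) 0).symm (t, y))
        = (Fin.cons t y : Fin (n+1) → ℝ) := by
      simp [MeasurableEquiv.piFinSuccAbove_symm_apply, Fin.insertNthEquiv, Fin.insertNth_zero]
    rw [he]
    have hmem : ((Fin.cons t y : Fin (n+1) → ℝ) ∈ Sset (n+1) r) ↔ ((t, y) ∈ K) := by
      simp only [Sset, Set.mem_setOf_eq, hK, Fin.sum_univ_succ, Fin.cons_zero, Fin.cons_succ]
    have hval : (∑ i : Fin (n+1), ((Fin.cons t y : Fin (n+1) → ℝ) i)^2)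
        = t^2 + ∑ i, (y i)^2 := by
      simp [Fin.sum_univ_succ]
    by_cases hm : (t, y) ∈ K
    · rw [Set.indicator_of_mem (hmem.mpr hm), Set.indicator_of_mem hm, hval]
    · rw [Set.indicator_of_notMem (fun h => hm (hmem.mp h)), Set.indicator_of_notMem hm]
  calc ∫ p : ℝ × (Fin n → ℝ), (Sset (n+1) r).indicator (fun x => ∑ i, (x i)^2)
        ((MeasurableEquiv.piFinSuccAbove (fun _ : Fin (n+1) => ℝ) 0).symm p)
      = ∫ p : ℝ × (Fin n → ℝ),
          K.indicator (fun p : ℝ × (Fin n → ℝ) => p.1^2 + ∑ i, (p.2 i)^2) p := by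
        exact integral_congr_ae (Filter.Eventually.of_forall hpt)
    _ = ∫ t : ℝ, ∫ y : Fin n → ℝ,
          K.indicator (fun p : ℝ × (Fin n → ℝ) => p.1^2 + ∑ i, (p.2 i)^2) (t, y) := by
        exact MeasureTheory.integral_prod _ hGint
    _ = ∫ t : ℝ, (t^2 * Vn n (r - |t|) + Mn n (r - |t|)) := by
        refine integral_congr_ae (Filter.Eventually.of_forall fun t => ?_)
        beta_reduce
        have hsec : (fun y : Fin n → ℝ =>
            K.indicator (fun p : ℝ × (Fin n → ℝ) => p.1^2 + ∑ i, (p.2 i)^2) (t, y))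
            = (Sset n (r - |t|)).indicator (fun y => t^2 + ∑ i, (y i)^2) := by
          funext y
          have : ((t, y) ∈ K) ↔ y ∈ Sset n (r - |t|) := by
            simp only [hK, Set.mem_setOf_eq, Sset]; constructor <;> intro h <;> linarith
          by_cases hm : y ∈ Sset n (r - |t|)
          · rw [Set.indicator_of_mem (this.mpr hm), Set.indicator_of_mem hm]
          · rw [Set.indicator_of_notMem (fun h => hm (this.mp h)), Set.indicator_of_notMem hm]
        rw [hsec, MeasureTheory.integral_indicator (measurableSet_Sset n _)]
        rw [MeasureTheory.integral_add (show Integrable (fun _ : Fin n → ℝ => t^2)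
          (volume.restrict (Sset n (r - |t|))) from integrableOn_const
          (isCompact_Sset n _).measure_lt_top.ne)
          (ContinuousOn.integrableOn_compact (isCompact_Sset n _)
            (Continuous.continuousOn (by fun_prop)))]
        rw [MeasureTheory.setIntegral_const]
        rw [Mn, Vn, smul_eq_mul, Measure.real]
        ring

lemma helper2 (m : ℕ) (r : ℝ) : ∫ t in (0:ℝ)..r, (r - t)^m = r^(m+1)/(m+1) := by
  have h := intervalIntegral.integral_comp_sub_left (a := (0:ℝ)) (b := r) (fun u => u^m) r
  simp only [sub_self, sub_zero] at h
  rw [h, integral_pow]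
  simp

lemma helper1 (n : ℕ) (r : ℝ) :
    ∫ t in (0:ℝ)..r, t^2 * (r - t)^n = 2 * r^(n+3) / ((n+1)*(n+2)*(n+3)) := by
  have h := intervalIntegral.integral_comp_sub_left (a := (0:ℝ)) (b := r)
    (fun u => u^2 * (r - u)^n) r
  simp only [sub_self, sub_zero] at h
  rw [← h]
  have hpt : ∀ x : ℝ, (r - x)^2 * (r - (r - x))^n = r^2 * x^n - 2*r*x^(n+1) + x^(n+2) := by
    intro x; ring
  simp_rw [hpt]
  have i1 : IntervalIntegrable (fun x : ℝ => r^2 * x^n) volume 0 r :=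
    (Continuous.intervalIntegrable (by fun_prop) _ _)
  have i2 : IntervalIntegrable (fun x : ℝ => 2*r*x^(n+1)) volume 0 r :=
    (Continuous.intervalIntegrable (by fun_prop) _ _)
  have i3 : IntervalIntegrable (fun x : ℝ => x^(n+2)) volume 0 r :=
    (Continuous.intervalIntegrable (by fun_prop) _ _)
  rw [intervalIntegral.integral_add (i1.sub i2) i3, intervalIntegral.integral_sub i1 i2,
    intervalIntegral.integral_const_mul, intervalIntegral.integral_const_mul,
    integral_pow, integral_pow, integral_pow]
  have h1 : ((n:ℝ) + 1) ≠ 0 := by positivity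
  have h2 : ((n:ℝ) + 1 + 1) ≠ 0 := by positivity
  have h3 : ((n:ℝ) + 2 + 1) ≠ 0 := by positivity
  have h2' : ((n:ℝ) + 2) ≠ 0 := by positivity
  have h3' : ((n:ℝ) + 3) ≠ 0 := by positivity
  simp only [zero_pow (Nat.succ_ne_zero _), sub_zero]
  push_cast
  field_simp
  ring

lemma Mn_eq : ∀ (n : ℕ) {r : ℝ}, 0 ≤ r →
    Mn n r = 2 * n * 2^n * r^(n+2) / (n+2).factorial := by
  intro n
  induction n with
  | zero =>
      intro r hr
      simp [Mn]
  | succ n ih =>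
      intro r hr
      rw [Mn_succ]
      set c : ℝ := 2 * n * 2^n / (n+2).factorial with hc
      set f : ℝ → ℝ := fun t => t^2 * ((2*(r-|t|))^n / n.factorial)
        + c * (r-|t|)^(n+2) with hf
      have hpt : ∀ t : ℝ, t^2 * Vn n (r - |t|) + Mn n (r - |t|)
          = Set.indicator (Set.Icc (-r) r) f t := by
        intro t
        by_cases ht : t ∈ Set.Icc (-r) r
        · have habs : |t| ≤ r := abs_le.mpr (Set.mem_Icc.mp ht)
          rw [Set.indicator_of_mem ht, Vn_eq n (by linarith), ih (by linarith), hf, hc]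
          ring
        · have habs : r < |t| := by
            by_contra h
            push_neg at h
            exact ht (Set.mem_Icc.mpr (abs_le.mp h))
          have hneg : r - |t| < 0 := by linarith
          rw [Vn_empty hneg, Mn_empty hneg, Set.indicator_of_notMem ht]
          ring
      rw [integral_congr_ae (Filter.Eventually.of_forall hpt),
        MeasureTheory.integral_indicator measurableSet_Icc,
        MeasureTheory.integral_Icc_eq_integral_Ioc,
        ← intervalIntegral.integral_of_le (by linarith : (-r) ≤ r)]
      have hcont : Continuous f := by
        rw [hf]; fun_prop
      have heven : ∀ t : ℝ, f (-t) = f t := by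
        intro t; rw [hf]; simp [abs_neg, neg_sq]
      rw [← intervalIntegral.integral_add_adjacent_intervals (a := -r) (b := 0) (c := r)
        (hcont.intervalIntegrable _ _) (hcont.intervalIntegrable _ _)]
      have hneg : (∫ t in (-r)..(0:ℝ), f t) = ∫ t in (0:ℝ)..r, f t := by
        have := intervalIntegral.integral_comp_neg (a := (0:ℝ)) (b := r) f
        simp only [neg_zero] at this
        rw [← this]
        exact intervalIntegral.integral_congr fun t _ => heven t
      rw [hneg]
      have habs : (∫ t in (0:ℝ)..r, f t)
          = ∫ t in (0:ℝ)..r, ((2:ℝ)^n / n.factorial) * (t^2 * (r-t)^n) + c * (r-t)^(n+2) := by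
        refine intervalIntegral.integral_congr fun t ht => ?_
        rw [Set.uIcc_of_le hr] at ht
        simp only [hf]
        have : |t| = t := abs_of_nonneg (Set.mem_Icc.mp ht).1
        rw [this]
        rw [mul_pow]
        ring
      rw [habs]
      have j1 : IntervalIntegrable (fun t : ℝ => ((2:ℝ)^n / n.factorial) * (t^2 * (r-t)^n))
          volume 0 r := (Continuous.intervalIntegrable (by fun_prop) _ _)
      have j2 : IntervalIntegrable (fun t : ℝ => c * (r-t)^(n+2)) volume 0 r :=
        (Continuous.intervalIntegrable (by fun_prop) _ _)
      rw [intervalIntegral.integral_add j1 j2, intervalIntegral.integral_const_mul,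
        intervalIntegral.integral_const_mul, helper1, helper2, hc]
      have hfac0 : ((n.factorial : ℝ)) ≠ 0 := by
        exact_mod_cast Nat.factorial_ne_zero n
      have hfac2 : (((n+2).factorial : ℝ)) ≠ 0 := by
        exact_mod_cast Nat.factorial_ne_zero (n+2)
      have hfac3 : (((n+3).factorial : ℝ)) ≠ 0 := by
        exact_mod_cast Nat.factorial_ne_zero (n+3)
      have e2 : ((n+2).factorial : ℝ) = (n+2) * ((n+1) * n.factorial) := by
        rw [show n + 2 = (n+1) + 1 from rfl, Nat.factorial_succ, Nat.factorial_succ]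
        push_cast; ring
      have e3 : ((n+1+2).factorial : ℝ) = (n+3) * ((n+2) * ((n+1) * n.factorial)) := by
        rw [show n + 1 + 2 = ((n+1) + 1) + 1 from rfl, Nat.factorial_succ, Nat.factorial_succ,
          Nat.factorial_succ]
        push_cast; ring
      rw [e2, e3]
      have h1 : ((n:ℝ) + 1) ≠ 0 := by positivity
      have h2 : ((n:ℝ) + 2) ≠ 0 := by positivity
      have h3 : ((n:ℝ) + 3) ≠ 0 := by positivity
      push_cast
      field_simp
      ring


def Cube (n : ℕ) : Set (Fin n → ℝ) := {y | ∀ i, |y i| ≤ 1}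

lemma Cube_eq (n : ℕ) : Cube n = Set.pi Set.univ (fun _ : Fin n => Set.Icc (-1:ℝ) 1) := by
  ext y; simp only [Cube, Set.mem_setOf_eq, Set.mem_pi, Set.mem_univ, forall_true_left, Set.mem_Icc, abs_le, true_implies]

lemma volume_Cube (n : ℕ) : (volume (Cube n)).toReal = 2 ^ n := by
  rw [Cube_eq, volume_pi_pi]
  simp [Real.volume_Icc]
  norm_num

lemma measurableSet_Cube (n : ℕ) : MeasurableSet (Cube n) := by
  rw [Cube_eq]
  exact MeasurableSet.univ_pi fun i => measurableSet_Icc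

lemma isCompact_Cube (n : ℕ) : IsCompact (Cube n) := by
  rw [Cube_eq]; exact isCompact_univ_pi fun i => isCompact_Icc

lemma integral_one_Icc : (∫ t in Set.Icc (-1:ℝ) 1, (1:ℝ)) = 2 := by
  simp [Real.volume_Icc]; norm_num

lemma integral_id_Icc : (∫ t in Set.Icc (-1:ℝ) 1, t) = 0 := by
  rw [MeasureTheory.integral_Icc_eq_integral_Ioc, ← intervalIntegral.integral_of_le (by norm_num : (-1:ℝ) ≤ 1)]
  simp

lemma integral_sq_Icc : (∫ t in Set.Icc (-1:ℝ) 1, t * t) = 2/3 := by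
  rw [MeasureTheory.integral_Icc_eq_integral_Ioc, ← intervalIntegral.integral_of_le (by norm_num : (-1:ℝ) ≤ 1)]
  have : (fun t : ℝ => t * t) = fun t : ℝ => t ^ 2 := by funext t; ring
  rw [this, integral_pow]
  norm_num

lemma cube_coord_integral {n : ℕ} (i j : Fin n) :
    (∫ y in Cube n, y i * y j) =
      ∏ k : Fin n, ∫ t in Set.Icc (-1:ℝ) 1,
        (if k = i then t else 1) * (if k = j then t else 1) := by
  rw [← MeasureTheory.integral_indicator (measurableSet_Cube n)]
  have key : (Cube n).indicator (fun y => y i * y j) = fun y : Fin n → ℝ =>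
      ∏ k, ((Set.Icc (-1:ℝ) 1).indicator
        (fun t => (if k = i then t else 1) * (if k = j then t else 1))) (y k) := by
    funext y
    by_cases hy : y ∈ Cube n
    · rw [Set.indicator_of_mem hy]
      have hmem : ∀ k, y k ∈ Set.Icc (-1:ℝ) 1 := by
        intro k; exact Set.mem_Icc.mpr (abs_le.mp (hy k))
      rw [Finset.prod_congr rfl (fun k _ => Set.indicator_of_mem (hmem k) _)]
      rw [Finset.prod_mul_distrib]
      rw [Finset.prod_ite_eq' Finset.univ i (fun k => y k),
        Finset.prod_ite_eq' Finset.univ j (fun k => y k)]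
      simp
    · rw [Set.indicator_of_notMem hy]
      have : ∃ k, y k ∉ Set.Icc (-1:ℝ) 1 := by
        by_contra h
        push_neg at h
        exact hy fun k => abs_le.mpr (Set.mem_Icc.mp (h k))
      obtain ⟨k0, hk0⟩ := this
      refine (Finset.prod_eq_zero (Finset.mem_univ k0) ?_).symm
      rw [Set.indicator_of_notMem hk0]
  rw [key]
  beta_reduce
  rw [MeasureTheory.integral_fintype_prod_volume_eq_prod
    (f := fun k (t : ℝ) => ((Set.Icc (-1:ℝ) 1).indicator
      (fun t => (if k = i then t else 1) * (if k = j then t else 1))) t)]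
  exact Finset.prod_congr rfl fun k _ => by
    rw [MeasureTheory.integral_indicator measurableSet_Icc]

lemma cube_coord_ne {n : ℕ} {i j : Fin n} (hij : i ≠ j) :
    (∫ y in Cube n, y i * y j) = 0 := by
  rw [cube_coord_integral]
  refine Finset.prod_eq_zero (Finset.mem_univ i) ?_
  simp only [if_pos rfl, if_neg hij, if_true, mul_one]
  exact integral_id_Icc

lemma cube_coord_eq {n : ℕ} (i : Fin n) :
    (∫ y in Cube n, y i * y i) = 2 ^ n / 3 := by
  rw [cube_coord_integral]
  have : ∀ k : Fin n, (∫ t in Set.Icc (-1:ℝ) 1,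
      (if k = i then t else 1) * (if k = i then t else 1)) = if k = i then 2/3 else 2 := by
    intro k
    by_cases h : k = i
    · simp only [if_pos h]; exact integral_sq_Icc
    · simp only [if_neg h, mul_one]; exact integral_one_Icc
  rw [Finset.prod_congr rfl fun k _ => this k]
  rw [← Finset.mul_prod_erase Finset.univ _ (Finset.mem_univ i), if_pos rfl]
  rw [Finset.prod_congr rfl (fun k hk => if_neg (Finset.ne_of_mem_erase hk)),
    Finset.prod_const, Finset.card_erase_of_mem (Finset.mem_univ i), Finset.card_univ,
    Fintype.card_fin]
  have hn : 1 ≤ n := Fin.pos_iff_nonempty.mpr ⟨i⟩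
  have h2 : (2:ℝ) ^ n = 2 ^ (n - 1) * 2 := by
    rw [← pow_succ]; congr 1; omega
  rw [h2]; ring

lemma inner_cube {n : ℕ} (x : Fin n → ℝ) :
    (∫ y in Cube n, (∑ i, x i * y i) ^ 2) = 2 ^ n / 3 * ∑ i, (x i) ^ 2 := by
  have expand : ∀ y : Fin n → ℝ, (∑ i, x i * y i) ^ 2
      = ∑ i, ∑ j, (x i * x j) * (y i * y j) := by
    intro y
    rw [sq, Finset.sum_mul_sum]
    exact Finset.sum_congr rfl fun i _ => Finset.sum_congr rfl fun j _ => by ring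
  simp_rw [expand]
  have hInt : ∀ (i j : Fin n), IntegrableOn
      (fun y : Fin n → ℝ => (x i * x j) * (y i * y j)) (Cube n) volume := by
    intro i j
    exact ContinuousOn.integrableOn_compact (isCompact_Cube n)
      (Continuous.continuousOn (by fun_prop))
  rw [MeasureTheory.integral_finset_sum _ (fun i _ => integrable_finset_sum _ (fun j _ => hInt i j))]
  have : ∀ i : Fin n, (∫ y in Cube n, ∑ j, (x i * x j) * (y i * y j))
      = x i * x i * (2 ^ n / 3) := by
    intro i
    rw [MeasureTheory.integral_finset_sum _ (fun j _ => hInt i j)]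
    rw [Finset.sum_eq_single i]
    · rw [integral_const_mul, cube_coord_eq]
    · intro j _ hj
      rw [integral_const_mul, cube_coord_ne (Ne.symm hj), mul_zero]
    · intro h; exact absurd (Finset.mem_univ i) h
  rw [Finset.sum_congr rfl fun i _ => this i, Finset.mul_sum]
  exact Finset.sum_congr rfl fun i _ => by ring

end FnOneAux

end FnOneAux

theorem f_n_one (n : ℕ) (hn : 1 ≤ n) :
    (∫ x in {x : Fin n → ℝ | ∑ i, |x i| ≤ 1},
        ∫ y in {y : Fin n → ℝ | ∀ i, |y i| ≤ 1}, (∑ i, x i * y i) ^ 2) /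
      ((volume {x : Fin n → ℝ | ∑ i, |x i| ≤ 1}).toReal *
        (volume {y : Fin n → ℝ | ∀ i, |y i| ≤ 1}).toReal) =
      2 * n / (3 * (n + 1) * (n + 2)) := by
  classical
  have hS : {x : Fin n → ℝ | ∑ i, |x i| ≤ 1} = FnOneAux.Sset n 1 := rfl
  have hC : {y : Fin n → ℝ | ∀ i, |y i| ≤ 1} = FnOneAux.Cube n := rfl
  rw [hS, hC]
  have hinner : (∫ x in FnOneAux.Sset n 1,
      ∫ y in FnOneAux.Cube n, (∑ i, x i * y i) ^ 2)
      = ∫ x in FnOneAux.Sset n 1, (2:ℝ) ^ n / 3 * ∑ i, (x i) ^ 2 :=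
    integral_congr_ae (Filter.Eventually.of_forall fun x => FnOneAux.inner_cube x)
  rw [hinner, MeasureTheory.integral_const_mul]
  have hM : (∫ x in FnOneAux.Sset n 1, ∑ i, (x i) ^ 2)
      = 2 * n * 2 ^ n / (n + 2).factorial := by
    have := FnOneAux.Mn_eq n (r := 1) (by norm_num)
    rw [FnOneAux.Mn] at this
    simpa using this
  have hV : (volume (FnOneAux.Sset n 1)).toReal = 2 ^ n / n.factorial := by
    have := FnOneAux.Vn_eq n (r := 1) (by norm_num)
    rw [FnOneAux.Vn] at this
    simpa using this
  rw [hM, hV, FnOneAux.volume_Cube]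
  have e2 : ((n+2).factorial : ℝ) = (n+2) * ((n+1) * n.factorial) := by
    rw [show n + 2 = (n+1) + 1 from rfl, Nat.factorial_succ, Nat.factorial_succ]
    push_cast; ring
  rw [e2]
  have hfac0 : ((n.factorial : ℝ)) ≠ 0 := by exact_mod_cast Nat.factorial_ne_zero n
  have h1 : ((n:ℝ) + 1) ≠ 0 := by positivity
  have h2 : ((n:ℝ) + 2) ≠ 0 := by positivity
  have hp : ((2:ℝ)) ^ n ≠ 0 := by positivity
  field_simp
end

section
/- For 1 < p < ∞ with 1/p + 1/q = 1 and n ≥ 1, (∫_{B_p^n}∫_{B_q^n} ⟨x,y⟩^2 dx dy)/(|B_p^n||B_q^n|) = n·Γ(3/p)Γ(3/q)Γ(1+n/p)Γ(1+n/q) / (Γ(1/p)Γ(1/q)Γ(1+(n+2)/p)Γ(1+(n+2)/q)). -/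
open MeasureTheory Set Metric Module Real ENNReal

section polar

variable {E : Type*} [NormedAddCommGroup E] [NormedSpace ℝ E] [MeasurableSpace E]
  [BorelSpace E] [FiniteDimensional ℝ E] [Nontrivial E]
  (μ : Measure E) [μ.IsAddHaarMeasure]

theorem polar_homog (f : E → ℝ) (d : ℕ)
    (hd : ∀ (r : ℝ), 0 < r → ∀ x, f (r • x) = r ^ d * f x) (G : ℝ → ℝ) :
    ∫ x, f x * G ‖x‖ ∂μ = (∫ y : sphere (0:E) 1, f y.1 ∂μ.toSphere) *
      ∫ r in Ioi (0:ℝ), r ^ (finrank ℝ E - 1) • (r ^ d * G r) := by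
  have h1 : ∫ x, f x * G ‖x‖ ∂μ = ∫ x : ({(0:E)}ᶜ : Set E), f x.1 * G ‖x.1‖
      ∂(μ.comap Subtype.val) := by
    rw [integral_subtype_comap (measurableSet_singleton _).compl fun x ↦ f x * G ‖x‖,
      restrict_compl_singleton]
  have h2 : ∀ x : ({(0:E)}ᶜ : Set E),
      (fun p : sphere (0:E) 1 × Ioi (0:ℝ) => f p.1.1 * (p.2.1 ^ d * G p.2.1))
        ((homeomorphUnitSphereProd E) x) = f x.1 * G ‖x.1‖ := by
    intro x
    have hx : (x : E) ≠ 0 := x.2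
    have hn : ‖(x : E)‖ ≠ 0 := norm_ne_zero_iff.2 hx
    simp only [homeomorphUnitSphereProd, homeomorphSphereProd_apply_fst_coe,
      homeomorphSphereProd_apply_snd_coe, one_smul, div_one]
    rw [hd _ (by positivity), inv_pow]
    field_simp
  rw [h1, ← integral_congr_ae (Filter.Eventually.of_forall h2),
    (μ.measurePreserving_homeomorphUnitSphereProd).integral_comp
      (Homeomorph.measurableEmbedding _)
      (fun p : sphere (0:E) 1 × Ioi (0:ℝ) => f p.1.1 * (p.2.1 ^ d * G p.2.1)),
    integral_prod_mul (fun y : sphere (0:E) 1 => f y.1)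
      (fun r : Ioi (0:ℝ) => r.1 ^ d * G r.1)]
  congr 1
  simp only [Measure.volumeIoiPow, ENNReal.ofReal]
  rw [integral_withDensity_eq_integral_smul ((measurable_subtype_coe.pow_const _).real_toNNReal),
    integral_subtype_comap measurableSet_Ioi
      fun a ↦ Real.toNNReal (a ^ (finrank ℝ E - 1)) • (a ^ d * G a)]
  refine setIntegral_congr_fun measurableSet_Ioi fun x hx ↦ ?_
  rw [NNReal.smul_def, Real.coe_toNNReal _ (pow_nonneg hx.out.le _)]

theorem moment_ball (f : E → ℝ) (d : ℕ)
    (hd : ∀ (r : ℝ), 0 < r → ∀ x, f (r • x) = r ^ d * f x) {p : ℝ} (hp : 0 < p) :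
    ∫ x in ball (0:E) 1, f x ∂μ =
      (∫ x, f x * Real.exp (-‖x‖ ^ p) ∂μ) / Real.Gamma ((finrank ℝ E + d) / p + 1) := by
  set D := finrank ℝ E with hD
  have hD1 : 1 ≤ D := finrank_pos
  set S := ∫ y : sphere (0:E) 1, f y.1 ∂μ.toSphere with hS
  set m : ℕ := D - 1 + d with hm
  have hmDd : (m : ℝ) + 1 = (D : ℝ) + d := by
    rw [hm]
    push_cast [Nat.cast_sub hD1]
    ring
  have hball : ∫ x in ball (0:E) 1, f x ∂μ = S / (D + d) := by
    have : ∫ x in ball (0:E) 1, f x ∂μ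
        = ∫ x, f x * (Iio (1:ℝ)).indicator (fun _ => (1:ℝ)) ‖x‖ ∂μ := by
      rw [← integral_indicator measurableSet_ball]
      refine integral_congr_ae (Filter.Eventually.of_forall fun x => ?_)
      simp only [Set.indicator_apply, mem_ball_zero_iff, Set.mem_Iio]
      by_cases hx : ‖x‖ < 1 <;> simp [hx]
    rw [this, polar_homog μ f d hd]
    have : ∫ r in Ioi (0:ℝ), r ^ (D - 1) • (r ^ d * (Iio (1:ℝ)).indicator (fun _ => (1:ℝ)) r)
        = 1 / ((D : ℝ) + d) := by
      have h1 : ∀ r ∈ Ioi (0:ℝ), r ^ (D - 1) • (r ^ d * (Iio (1:ℝ)).indicator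
          (fun _ => (1:ℝ)) r) = (Iio (1:ℝ)).indicator (fun r => r ^ m) r := by
        intro r _
        by_cases hr : r ∈ Iio (1:ℝ)
        · rw [Set.indicator_of_mem hr, Set.indicator_of_mem hr, smul_eq_mul, mul_one, ← pow_add]
        · rw [Set.indicator_of_notMem hr, Set.indicator_of_notMem hr, smul_eq_mul,
            mul_zero, mul_zero]
      rw [setIntegral_congr_fun measurableSet_Ioi h1,
        setIntegral_indicator measurableSet_Iio]
      have : Ioi (0:ℝ) ∩ Iio 1 = Ioo 0 1 := Ioi_inter_Iio
      rw [this, MeasureTheory.Measure.restrict_congr_set Ioo_ae_eq_Ioc,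
        ← intervalIntegral.integral_of_le (by norm_num : (0:ℝ) ≤ 1), integral_pow]
      simp [hmDd]
    rw [this]
    field_simp
    rfl
  have hexp : ∫ x, f x * Real.exp (-‖x‖ ^ p) ∂μ = S * (1 / p * Real.Gamma (((D:ℝ) + d) / p)) := by
    rw [polar_homog μ f d hd (fun r => Real.exp (-r ^ p))]
    congr 1
    have h1 : ∀ r ∈ Ioi (0:ℝ), r ^ (D - 1) • (r ^ d * Real.exp (-r ^ p))
        = r ^ (m : ℝ) * Real.exp (-r ^ p) := by
      intro r _
      rw [Real.rpow_natCast, smul_eq_mul, ← mul_assoc, ← pow_add]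
    rw [setIntegral_congr_fun measurableSet_Ioi h1,
      integral_rpow_mul_exp_neg_rpow hp (by exact_mod_cast neg_one_lt_zero.trans_le (Nat.cast_nonneg m) : (-1:ℝ) < m), hmDd]
  have hDd : (0:ℝ) < (D : ℝ) + d := by positivity
  have hG : 0 < Real.Gamma (((D:ℝ) + d) / p) := Real.Gamma_pos_of_pos (by positivity)
  have h1 : ((D:ℝ) + d) ≠ 0 := hDd.ne'
  have h2 : p ≠ 0 := hp.ne'
  have h3 : Real.Gamma (((D:ℝ) + d)/p) ≠ 0 := hG.ne'
  rw [hball, hexp, Real.Gamma_add_one (ne_of_gt (by positivity) : ((D:ℝ)+d)/p ≠ 0)]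
  field_simp

end polar

section transfer

variable {E : Type*} [AddCommGroup E] [Module ℝ E] [FiniteDimensional ℝ E] [mE : MeasurableSpace E]
  [tE : TopologicalSpace E] [IsTopologicalAddGroup E] [BorelSpace E] [T2Space E] [ContinuousSMul ℝ E]
  (μ : Measure E) [μ.IsAddHaarMeasure] {g : E → ℝ}

theorem moment_lt_one' [Nontrivial E] (h1 : g 0 = 0) (h2 : ∀ x, g (- x) = g x)
    (h3 : ∀ x y, g (x + y) ≤ g x + g y) (h4 : ∀ {x}, g x = 0 → x = 0)
    (h5 : ∀ r x, g (r • x) ≤ |r| * (g x)) {p : ℝ} (hp : 0 < p)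
    (f : E → ℝ) (d : ℕ) (hd : ∀ (r : ℝ), 0 < r → ∀ x, f (r • x) = r ^ d * f x) :
    ∫ x in {x | g x < 1}, f x ∂μ =
      (∫ x, f x * Real.exp (-(g x) ^ p) ∂μ) / Real.Gamma ((finrank ℝ E + d) / p + 1) := by
  letI F : Type _ := E
  letI : NormedAddCommGroup F :=
  { norm := g
    dist := fun x y => g (x - y)
    dist_self := by simp only [_root_.sub_self, h1, forall_const]
    dist_comm := fun x y => by show g (x - y) = g (y - x); rw [← h2, neg_sub]
    dist_triangle := fun x y z => by
      show g (x - z) ≤ g (x - y) + g (y - z); convert h3 (x - y) (y - z) using 2; abel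
    dist_eq := fun x y => by
      show g (x - y) = g (-x + y); rw [← h2 (-x + y)]; congr 1; abel
    edist := fun x y => .ofReal (g (x - y))
    edist_dist := fun _ _ => rfl
    eq_of_dist_eq_zero := by convert fun _ _ h => eq_of_sub_eq_zero (h4 h) }
  letI : NormedSpace ℝ F :=
  { norm_smul_le := fun _ _ ↦ h5 _ _ }
  letI : TopologicalSpace F := UniformSpace.toTopologicalSpace
  letI : MeasurableSpace F := borel F
  have : BorelSpace F := { measurable_eq := rfl }
  let φ := @LinearEquiv.toContinuousLinearEquiv ℝ _ E _ _ tE _ _ F _ _ _ _ _ _ _ _ _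
    (LinearEquiv.refl ℝ E : E ≃ₗ[ℝ] F)
  let ν : Measure F := @Measure.map E F mE _ φ μ
  have : Measure.IsAddHaarMeasure ν :=
    @ContinuousLinearEquiv.isAddHaarMeasure_map E F ℝ ℝ _ _ _ _ _ _ tE _ _ _ _ _ _ _ mE _ _ _ φ μ _
  let ψ := @Homeomorph.toMeasurableEquiv E F tE mE _ _ _ _
    (@ContinuousLinearEquiv.toHomeomorph ℝ ℝ _ _ _ _ _ _ E tE _ F _ _ _ _ φ)
  have hψ : @MeasurePreserving E F mE _ ψ μ ν :=
    @Measurable.measurePreserving E F mE _ ψ (@MeasurableEquiv.measurable E F mE _ ψ) _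
  have hemb : @MeasurableEmbedding E F mE _ ψ := @MeasurableEquiv.measurableEmbedding E F mE _ ψ
  have key := moment_ball (E := F) ν f d hd hp
  have e1 : (ψ ⁻¹' (Metric.ball (0:F) 1)) = {x : E | g x < 1} := by
    ext x
    simp only [Set.mem_preimage, Metric.mem_ball, dist_zero_right]
    exact Iff.rfl
  have e2 := @MeasurePreserving.setIntegral_preimage_emb E ℝ mE _ _ μ F _ (⇑ψ) ν hψ hemb f (Metric.ball (0:F) 1)
  rw [e1] at e2
  have e3 := @MeasurePreserving.integral_comp E ℝ _ _ mE μ F _ (⇑ψ) ν hψ hemb (fun x : F => f x * Real.exp (-‖x‖ ^ p))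
  have e4 : Module.finrank ℝ F = Module.finrank ℝ E := rfl
  rw [e4, ← e2, ← e3] at key
  exact key


end transfer

theorem lp_moment (n : ℕ) (hn : 1 ≤ n) {p : ℝ} (hp : 1 ≤ p) (i : Fin n) :
    ∫ x in {x : Fin n → ℝ | ∑ j, |x j| ^ p ≤ 1}, (x i) ^ 2 =
      (2 * (1 / p * Gamma (3 / p))) * (2 * Gamma (1 / p + 1)) ^ (n - 1) /
        Gamma (((n : ℝ) + 2) / p + 1) := by
  haveI : Nonempty (Fin n) := ⟨⟨0, hn⟩⟩
  have h₁ : 0 < p := by linarith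
  have h₂ : ∀ x : Fin n → ℝ, 0 ≤ ∑ j, |x j| ^ p := fun x =>
    Finset.sum_nonneg fun j _ => rpow_nonneg (abs_nonneg _) _
  -- norm facts for the Lp norm, as in mathlib's `volume_sum_rpow_lt_one`
  have htr : (ENNReal.ofReal p).toReal = p := toReal_ofReal (le_of_lt h₁)
  have eq_norm (x : Fin n → ℝ) :
      ‖WithLp.toLp (.ofReal p) x‖ = (∑ j, |x j| ^ p) ^ (1 / p) := by
    simp [PiLp.norm_eq_sum (f := WithLp.toLp (.ofReal p) x) (htr.symm ▸ h₁), htr]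
  have : Fact (1 ≤ ENNReal.ofReal p) := fact_iff.mpr (ofReal_one ▸ (ofReal_le_ofReal hp))
  have nm_zero : ‖WithLp.toLp (.ofReal p) (0 : Fin n → ℝ)‖ = 0 := norm_zero
  have eq_zero (x : Fin n → ℝ) : ‖WithLp.toLp (.ofReal p) x‖ = 0 ↔ x = 0 :=
    norm_eq_zero.trans (WithLp.toLp_eq_zero _)
  have nm_neg := fun x : Fin n → ℝ => norm_neg (WithLp.toLp (.ofReal p) x)
  have nm_add := fun x y : Fin n → ℝ =>
    norm_add_le (WithLp.toLp (.ofReal p) x) (WithLp.toLp (.ofReal p) y)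
  have nm_smul := fun (r : ℝ) (x : Fin n → ℝ) =>
    norm_smul_le (β := PiLp (.ofReal p) (fun _ : Fin n => ℝ)) r (WithLp.toLp (.ofReal p) x)
  simp_rw [← WithLp.toLp_neg, ← WithLp.toLp_add, ← WithLp.toLp_smul, eq_norm,
    norm_eq_abs] at eq_zero nm_zero nm_neg nm_add nm_smul
  set g : (Fin n → ℝ) → ℝ := fun x => (∑ j, |x j| ^ p) ^ (1 / p) with hg
  have hople : 0 < 1 / p := by positivity
  have hle_iff : ∀ a : ℝ, 0 ≤ a → (a ^ (1/p) ≤ 1 ↔ a ≤ 1) := by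
    intro a ha
    constructor
    · intro h
      by_contra h'
      push_neg at h'
      have : 1 < a ^ (1/p) :=
        (Real.one_lt_rpow_iff_of_pos (by linarith)).2 (Or.inl ⟨h', hople⟩)
      linarith
    · intro h
      exact Real.rpow_le_one ha h hople.le
  have hlt_iff : ∀ a : ℝ, 0 ≤ a → (a ^ (1/p) < 1 ↔ a < 1) := by
    intro a ha
    constructor
    · intro h
      by_contra h'
      push_neg at h'
      have : 1 ≤ a ^ (1/p) := Real.one_le_rpow h' hople.le
      linarith
    · intro h
      exact Real.rpow_lt_one ha h hople
  have hset_le : {x : Fin n → ℝ | g x ≤ 1} = {x : Fin n → ℝ | ∑ j, |x j| ^ p ≤ 1} := by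
    ext x; exact hle_iff _ (h₂ x)
  have hset_lt : {x : Fin n → ℝ | g x < 1} = {x : Fin n → ℝ | ∑ j, |x j| ^ p < 1} := by
    ext x; exact hlt_iff _ (h₂ x)
  -- the closed and open balls agree a.e.
  have hmeas_le : volume {x : Fin n → ℝ | g x ≤ 1} ≠ ⊤ := by
    rw [show {x : Fin n → ℝ | g x ≤ 1} = {x : Fin n → ℝ | (∑ j, |x j| ^ p) ^ (1/p) ≤ (1:ℝ)}
      from rfl, MeasureTheory.volume_sum_rpow_le _ hp]
    exact ENNReal.mul_ne_top (by simp) ofReal_ne_top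
  have hmeas_eq : volume {x : Fin n → ℝ | g x ≤ 1} = volume {x : Fin n → ℝ | g x < 1} :=
    MeasureTheory.measure_le_eq_lt _ nm_zero (fun x ↦ nm_neg x) (fun x y ↦ nm_add x y)
      (eq_zero _).mp (fun r x => nm_smul r x) 1
  have hsub : {x : Fin n → ℝ | g x < 1} ⊆ {x : Fin n → ℝ | g x ≤ 1} :=
    fun x hx => le_of_lt (Set.mem_setOf_eq ▸ hx)
  have hmg : Measurable g := by fun_prop
  have hae : {x : Fin n → ℝ | g x ≤ 1} =ᵐ[volume] {x : Fin n → ℝ | g x < 1} := by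
    rw [MeasureTheory.ae_eq_set]
    constructor
    · rw [measure_diff hsub (hmg measurableSet_Iio).nullMeasurableSet
        (hmeas_eq ▸ hmeas_le), hmeas_eq, tsub_self]
    · rw [Set.diff_eq_empty.2 hsub, measure_empty]
  -- apply the abstract moment lemma
  have key := moment_lt_one' (volume : Measure (Fin n → ℝ)) nm_zero (fun x ↦ nm_neg x)
    (fun x y ↦ nm_add x y) (eq_zero _).mp (fun r x => nm_smul r x) h₁
    (fun x => (x i) ^ 2) 2
    (fun r hr x => by simp [mul_pow])
  rw [← hset_le, setIntegral_congr_set hae, key]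
  -- compute the Gaussian-type integral
  have hptwise : ∀ x : Fin n → ℝ, (x i) ^ 2 * Real.exp (-(g x) ^ p) =
      ∏ j, ((if j = i then (x j) ^ 2 else 1) * Real.exp (-|x j| ^ p)) := by
    intro x
    rw [hg]
    simp only
    rw [← Real.rpow_mul (h₂ x), one_div, inv_mul_cancel₀ h₁.ne', Real.rpow_one,
      Finset.prod_mul_distrib, Finset.prod_ite_eq' Finset.univ i (fun j => (x j) ^ 2),
      if_pos (Finset.mem_univ i), ← Real.exp_sum, Finset.sum_neg_distrib]
  have hA : ∫ t : ℝ, Real.exp (-|t| ^ p) = 2 * Real.Gamma (1 / p + 1) := by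
    rw [integral_comp_abs (f := fun t => Real.exp (-t ^ p)), integral_exp_neg_rpow h₁]
  have hB : ∫ t : ℝ, t ^ 2 * Real.exp (-|t| ^ p) = 2 * (1 / p * Real.Gamma (3 / p)) := by
    have e1 : ∫ t : ℝ, t ^ 2 * Real.exp (-|t| ^ p)
        = ∫ t : ℝ, (fun s => s ^ 2 * Real.exp (-s ^ p)) |t| :=
      integral_congr_ae (Filter.Eventually.of_forall fun t => by simp [sq_abs])
    rw [e1, integral_comp_abs (f := fun s => s ^ 2 * Real.exp (-s ^ p))]
    congr 1
    have e2 : ∀ s ∈ Set.Ioi (0:ℝ), s ^ 2 * Real.exp (-s ^ p) = s ^ (2:ℝ) * Real.exp (-s ^ p) := by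
      intro s _
      norm_cast
    rw [setIntegral_congr_fun measurableSet_Ioi e2,
      integral_rpow_mul_exp_neg_rpow h₁ (by norm_num)]
    norm_num
  have hint : ∫ x : Fin n → ℝ, (x i) ^ 2 * Real.exp (-(g x) ^ p)
      = (2 * (1 / p * Real.Gamma (3 / p))) * (2 * Real.Gamma (1 / p + 1)) ^ (n - 1) := by
    rw [integral_congr_ae (Filter.Eventually.of_forall hptwise),
      MeasureTheory.integral_fintype_prod_volume_eq_prod (ι := Fin n)
        (f := fun j t => (if j = i then t ^ 2 else 1) * Real.exp (-|t| ^ p)),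
      ← Finset.prod_erase_mul Finset.univ _ (Finset.mem_univ i)]
    have e3 : ∀ j ∈ Finset.univ.erase i,
        (∫ t : ℝ, (if j = i then t ^ 2 else 1) * Real.exp (-|t| ^ p))
          = 2 * Real.Gamma (1 / p + 1) := by
      intro j hj
      simp only [if_neg (Finset.ne_of_mem_erase hj), one_mul]
      exact hA
    rw [Finset.prod_congr rfl e3, Finset.prod_const,
      Finset.card_erase_of_mem (Finset.mem_univ i), Finset.card_univ, Fintype.card_fin]
    simp only [eq_self_iff_true, if_true]
    rw [hB, mul_comm]
  rw [hint]
  congr 2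
  rw [Module.finrank_fintype_fun_eq_card, Fintype.card_fin]
  push_cast
  ring


theorem lp_offdiag (n : ℕ) {q : ℝ} (i j : Fin n) (hij : i ≠ j) :
    ∫ y in {y : Fin n → ℝ | ∑ k, |y k| ^ q ≤ 1}, y i * y j = 0 := by
  classical
  set S := {y : Fin n → ℝ | ∑ k, |y k| ^ q ≤ 1} with hS
  set σ : (Fin n → ℝ) → (Fin n → ℝ) :=
    fun y k => (if k = i then (Neg.neg : ℝ → ℝ) else id) (y k) with hσ
  have hmp : MeasurePreserving σ volume volume := by
    refine volume_preserving_pi (f := fun (k : Fin n) => (if k = i then (Neg.neg : ℝ → ℝ) else id))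
      fun k => ?_
    by_cases h : k = i
    · rw [if_pos h]; exact Measure.measurePreserving_neg volume
    · rw [if_neg h]; exact MeasurePreserving.id volume
  have hinv : ∀ y, σ (σ y) = y := by
    intro y; funext k; by_cases h : k = i <;> simp [hσ, h]
  have hemb : MeasurableEmbedding σ :=
    (MeasurableEquiv.mk ⟨σ, σ, fun y => hinv y, fun y => hinv y⟩
      hmp.measurable hmp.measurable).measurableEmbedding
  have hSm : MeasurableSet S := measurableSet_le (by fun_prop) measurable_const
  have hpre : σ ⁻¹' S = S := by
    ext y
    simp only [Set.mem_preimage, hS, Set.mem_setOf_eq]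
    have h0 : ∀ k, |σ y k| = |y k| := by
      intro k; by_cases h : k = i <;> simp [hσ, h]
    rw [Finset.sum_congr rfl fun k _ => by rw [h0 k]]
  have e := hmp.setIntegral_preimage_emb hemb (fun y => y i * y j) S
  rw [hpre] at e
  have e2 : ∫ y in S, (fun y : Fin n → ℝ => y i * y j) (σ y) = - ∫ y in S, y i * y j := by
    rw [← integral_neg]
    refine setIntegral_congr_fun hSm fun y _ => ?_
    simp [hσ, Ne.symm hij]
  rw [e2] at e
  linarith

theorem lp_vol (n : ℕ) (hn : 1 ≤ n) {p : ℝ} (hp : 1 ≤ p) :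
    volume {x : Fin n → ℝ | ∑ j, |x j| ^ p ≤ 1} =
      ENNReal.ofReal ((2 * Gamma (1 / p + 1)) ^ n / Gamma (n / p + 1)) := by
  haveI : Nonempty (Fin n) := ⟨⟨0, hn⟩⟩
  have h₁ : 0 < p := lt_of_lt_of_le one_pos hp
  have hople : 0 < 1 / p := by positivity
  have hset : {x : Fin n → ℝ | ∑ j, |x j| ^ p ≤ 1}
      = {x : Fin n → ℝ | (∑ j, |x j| ^ p) ^ (1 / p) ≤ 1} := by
    ext x
    have ha : 0 ≤ ∑ j, |x j| ^ p := Finset.sum_nonneg fun j _ => rpow_nonneg (abs_nonneg _) _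
    simp only [Set.mem_setOf_eq]
    constructor
    · intro h
      exact Real.rpow_le_one ha h hople.le
    · intro h
      by_contra h'
      push_neg at h'
      have : 1 < (∑ j, |x j| ^ p) ^ (1/p) :=
        (Real.one_lt_rpow_iff_of_pos (by linarith)).2 (Or.inl ⟨h', hople⟩)
      linarith
  rw [hset, MeasureTheory.volume_sum_rpow_le _ hp 1]
  simp [Fintype.card_fin]

theorem lp_int (n : ℕ) (hn : 1 ≤ n) {q : ℝ} (hq : 1 ≤ q) (i j : Fin n) :
    IntegrableOn (fun y : Fin n → ℝ => y i * y j)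
      {y : Fin n → ℝ | ∑ k, |y k| ^ q ≤ 1} := by
  have h₁ : 0 < q := lt_of_lt_of_le one_pos hq
  have hSm : MeasurableSet {y : Fin n → ℝ | ∑ k, |y k| ^ q ≤ 1} :=
    measurableSet_le (by fun_prop) measurable_const
  refine Measure.integrableOn_of_bounded (M := 1) ?_
    ((by fun_prop : Measurable fun y : Fin n → ℝ => y i * y j).aestronglyMeasurable) ?_
  · rw [lp_vol n hn hq]
    exact ofReal_ne_top
  · filter_upwards [ae_restrict_mem hSm] with y hy
    have hk : ∀ k, |y k| ≤ 1 := by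
      intro k
      by_contra h
      push_neg at h
      have h2 : 1 < |y k| ^ q :=
        (Real.one_lt_rpow_iff_of_pos (by linarith)).2 (Or.inl ⟨h, h₁⟩)
      have h3 : |y k| ^ q ≤ ∑ m, |y m| ^ q :=
        Finset.single_le_sum (fun m _ => rpow_nonneg (abs_nonneg _) _) (Finset.mem_univ k)
      have hy' : ∑ m, |y m| ^ q ≤ 1 := hy
      linarith
    rw [Real.norm_eq_abs, abs_mul]
    nlinarith [hk i, hk j, abs_nonneg (y i), abs_nonneg (y j)]

theorem f_n_p_gamma (n : ℕ) (hn : 1 ≤ n) (p q : ℝ) (hp : 1 < p) (hpq : 1 / p + 1 / q = 1) :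
    (∫ x in {x : Fin n → ℝ | ∑ i, |x i| ^ p ≤ 1},
        ∫ y in {y : Fin n → ℝ | ∑ i, |y i| ^ q ≤ 1}, (∑ i, x i * y i) ^ 2) /
      ((volume {x : Fin n → ℝ | ∑ i, |x i| ^ p ≤ 1}).toReal *
        (volume {y : Fin n → ℝ | ∑ i, |y i| ^ q ≤ 1}).toReal) =
      n * (Real.Gamma (3 / p) * Real.Gamma (3 / q) *
            Real.Gamma (1 + n / p) * Real.Gamma (1 + n / q)) /
        (Real.Gamma (1 / p) * Real.Gamma (1 / q) *
          Real.Gamma (1 + ((n : ℝ) + 2) / p) * Real.Gamma (1 + ((n : ℝ) + 2) / q)) := by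
  have hp0 : 0 < p := by linarith
  have hp1 : 1 ≤ p := hp.le
  have hinvp : 1 / p < 1 := by rw [div_lt_one hp0]; exact hp
  have hinvp0 : 0 < 1 / p := by positivity
  have hinvq : 0 < 1 / q := by linarith
  have hq0 : 0 < q := one_div_pos.mp hinvq
  have hq : 1 < q := by
    have := (div_lt_one hq0).mp (by linarith : 1 / q < 1)
    exact this
  have hq1 : 1 ≤ q := hq.le
  set Sp := {x : Fin n → ℝ | ∑ i, |x i| ^ p ≤ 1} with hSp
  set Sq := {y : Fin n → ℝ | ∑ i, |y i| ^ q ≤ 1} with hSq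
  have hSpm : MeasurableSet Sp := measurableSet_le (by fun_prop) measurable_const
  have hSqm : MeasurableSet Sq := measurableSet_le (by fun_prop) measurable_const
  set Mp := (2 * (1 / p * Gamma (3 / p))) * (2 * Gamma (1 / p + 1)) ^ (n - 1) /
      Gamma (((n : ℝ) + 2) / p + 1) with hMp
  set Mq := (2 * (1 / q * Gamma (3 / q))) * (2 * Gamma (1 / q + 1)) ^ (n - 1) /
      Gamma (((n : ℝ) + 2) / q + 1) with hMq
  have hvalq : ∀ (i j : Fin n), (∫ y in Sq, y i * y j) = if i = j then Mq else 0 := by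
    intro i j
    by_cases h : i = j
    · subst h
      rw [if_pos rfl, show (fun y : Fin n → ℝ => y i * y i) = fun y => (y i) ^ 2 from
        funext fun y => (pow_two (y i)).symm]
      exact lp_moment n hn hq1 i
    · rw [if_neg h]
      exact lp_offdiag n i j h
  have hvalp : ∀ (i : Fin n), (∫ x in Sp, x i * x i) = Mp := by
    intro i
    rw [show (fun x : Fin n → ℝ => x i * x i) = fun x => (x i) ^ 2 from
      funext fun x => (pow_two (x i)).symm]
    exact lp_moment n hn hp1 i
  have hinner : ∀ x : Fin n → ℝ, (∫ y in Sq, (∑ i, x i * y i) ^ 2)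
      = (∑ i, (x i) ^ 2) * Mq := by
    intro x
    have hexp : ∀ y : Fin n → ℝ, (∑ i, x i * y i) ^ 2
        = ∑ i, ∑ j, (x i * x j) * (y i * y j) := by
      intro y
      rw [pow_two, Finset.sum_mul_sum]
      exact Finset.sum_congr rfl fun i _ => Finset.sum_congr rfl fun j _ => by ring
    rw [setIntegral_congr_fun hSqm fun y _ => hexp y,
      integral_finset_sum _ (fun i _ => integrable_finset_sum _ (fun j _ =>
        ((lp_int n hn hq1 i j).const_mul (x i * x j))))]
    have : ∀ i : Fin n, (∫ y in Sq, ∑ j, (x i * x j) * (y i * y j))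
        = ∑ j, (x i * x j) * ∫ y in Sq, y i * y j := by
      intro i
      rw [integral_finset_sum _ (fun j _ => ((lp_int n hn hq1 i j).const_mul (x i * x j)))]
      exact Finset.sum_congr rfl fun j _ => integral_const_mul _ _
    rw [Finset.sum_congr rfl fun i _ => this i]
    simp_rw [hvalq, mul_ite, mul_zero, Finset.sum_ite_eq, Finset.mem_univ, if_true]
    rw [← Finset.sum_mul]
    congr 1
    exact Finset.sum_congr rfl fun i _ => by ring
  have houter : (∫ x in Sp, ∫ y in Sq, (∑ i, x i * y i) ^ 2) = n * (Mp * Mq) := by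
    rw [setIntegral_congr_fun hSpm fun x _ => hinner x]
    have hexp2 : ∀ x : Fin n → ℝ, (∑ i, (x i) ^ 2) * Mq = ∑ i, (x i * x i) * Mq := by
      intro x
      rw [Finset.sum_mul]
      exact Finset.sum_congr rfl fun i _ => by ring
    rw [setIntegral_congr_fun hSpm fun x _ => hexp2 x,
      integral_finset_sum _ (fun i _ => (lp_int n hn hp1 i i).mul_const Mq)]
    have : ∀ i : Fin n, (∫ x in Sp, (x i * x i) * Mq) = Mp * Mq := by
      intro i
      rw [integral_mul_const, hvalp i]
    rw [Finset.sum_congr rfl fun i _ => this i, Finset.sum_const, Finset.card_univ,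
      Fintype.card_fin, nsmul_eq_mul]
  -- gamma positivity facts
  have hg1p : 0 < Gamma (1 / p) := Gamma_pos_of_pos (by positivity)
  have hg1q : 0 < Gamma (1 / q) := Gamma_pos_of_pos (by positivity)
  have hg3p : 0 < Gamma (3 / p) := Gamma_pos_of_pos (by positivity)
  have hg3q : 0 < Gamma (3 / q) := Gamma_pos_of_pos (by positivity)
  have hgnp : 0 < Gamma ((n : ℝ) / p + 1) := Gamma_pos_of_pos (by positivity)
  have hgnq : 0 < Gamma ((n : ℝ) / q + 1) := Gamma_pos_of_pos (by positivity)
  have hgn2p : 0 < Gamma (((n : ℝ) + 2) / p + 1) := Gamma_pos_of_pos (by positivity)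
  have hgn2q : 0 < Gamma (((n : ℝ) + 2) / q + 1) := Gamma_pos_of_pos (by positivity)
  have hgadd_p : Gamma (1 / p + 1) = (1 / p) * Gamma (1 / p) :=
    Real.Gamma_add_one (by positivity)
  have hgadd_q : Gamma (1 / q + 1) = (1 / q) * Gamma (1 / q) :=
    Real.Gamma_add_one (by positivity)
  rw [houter, lp_vol n hn hp1, lp_vol n hn hq1,
    toReal_ofReal (by positivity), toReal_ofReal (by positivity),
    show (1:ℝ) + n / p = (n:ℝ) / p + 1 from by ring,
    show (1:ℝ) + n / q = (n:ℝ) / q + 1 from by ring,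
    show (1:ℝ) + ((n:ℝ) + 2) / p = ((n:ℝ) + 2) / p + 1 from by ring,
    show (1:ℝ) + ((n:ℝ) + 2) / q = ((n:ℝ) + 2) / q + 1 from by ring]
  obtain ⟨m, rfl⟩ : ∃ m, n = m + 1 := ⟨n - 1, (Nat.succ_pred_eq_of_pos hn).symm⟩
  rw [hMp, hMq, hgadd_p, hgadd_q]
  simp only [Nat.add_sub_cancel]
  rw [pow_succ]
  field_simp
  ring_nf
  field_simp
end
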